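/- Let r ≥ 1, 0 ≤ j ≤ 2^{r-1} - 1, and let A = M^{2^r - j} + 1 in F_2[x]. Then the length ℓ_A equals j + 1. -/
import Mathlib


open Polynomial Finset

/-- The polynomial `M = x^2 + x + 1` over `F_2`. -/
noncomputable def M : Polynomial (ZMod 2) := X ^ 2 + X + 1

/-- The odd part of a binary polynomial: `P` divided by `x^{val_x(P)} (x+1)^{val_{x+1}(P)}`. -/
noncomputable def oddPart (P : Polynomial (ZMod 2)) : Polynomial (ZMod 2) :=
  P / (X ^ P.rootMultiplicity 0 * (X + 1) ^ P.rootMultiplicity 1)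

/-- The Collatz sequence of a binary polynomial `A`:
`A_0 = A`, `A_{2k+1} = oddPart A_{2k}`, `A_{2k+2} = 1 + M * A_{2k+1}`. -/
noncomputable def collatz (A : Polynomial (ZMod 2)) : ℕ → Polynomial (ZMod 2)
  | 0 => A
  | n + 1 => if n % 2 = 0 then oddPart (collatz A n) else 1 + M * collatz A n

/-- `a_k`: the multiplicity of `x` in `A_k`. -/
noncomputable def aSeq (A : Polynomial (ZMod 2)) (k : ℕ) : ℕ :=
  (collatz A k).rootMultiplicity 0

/-- `b_k`: the multiplicity of `x + 1` in `A_k`. -/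
noncomputable def bSeq (A : Polynomial (ZMod 2)) (k : ℕ) : ℕ :=
  (collatz A k).rootMultiplicity 1

/-- The length `ℓ_A = m + 1`, where `m` is the least nonnegative integer
with `A_{2m+1} = 1`. -/
noncomputable def collatzLength (A : Polynomial (ZMod 2)) : ℕ :=
  sInf {m : ℕ | collatz A (2 * m + 1) = 1} + 1

abbrev P2 := Polynomial (ZMod 2)

lemma two_eq_zero' : (2 : P2) = 0 := by
  simpa using CharP.cast_eq_zero P2 2

lemma X1_eq : (X + 1 : P2) = X - Polynomial.C 1 := by
  rw [sub_eq_add_neg, ← Polynomial.C_neg, show (-1 : ZMod 2) = 1 by decide, Polynomial.C_1]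

lemma X0_eq : (X : P2) = X - Polynomial.C 0 := by simp

lemma X1_ne_zero : (X + 1 : P2) ≠ 0 := by
  rw [X1_eq]; exact X_sub_C_ne_zero 1

lemma collatz_odd_step (A : P2) (k : ℕ) : collatz A (2*k+1) = oddPart (collatz A (2*k)) := by
  simp [collatz, Nat.mul_mod_right]

lemma collatz_even_step (A : P2) (k : ℕ) : collatz A (2*k+2) = 1 + M * collatz A (2*k+1) := by
  have h : (2*k+1) % 2 = 1 := by omega
  rw [show 2*k+2 = (2*k+1)+1 from rfl, collatz, h]
  norm_num

lemma rm_zero (a : ℕ) : rootMultiplicity 0 (X ^ a : P2) = a := by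
  rw [X0_eq]; exact rootMultiplicity_X_sub_C_pow 0 a

lemma rm_one (b : ℕ) : rootMultiplicity 1 ((X + 1) ^ b : P2) = b := by
  rw [X1_eq]; exact rootMultiplicity_X_sub_C_pow 1 b

lemma rm_eq_zero_of_eval {p : P2} {x : ZMod 2} (h : p.eval x ≠ 0) :
    rootMultiplicity x p = 0 :=
  rootMultiplicity_eq_zero h

/-- Spec lemma for `oddPart`. -/
lemma oddPart_spec (a b : ℕ) (C : P2) (h0 : C.eval 0 ≠ 0) (h1 : C.eval 1 ≠ 0) :
    oddPart (X ^ a * (X + 1) ^ b * C) = C := by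
  have hC : C ≠ 0 := fun h => h0 (by simp [h])
  have hXa : (X ^ a : P2) ≠ 0 := pow_ne_zero _ X_ne_zero
  have hXb : ((X + 1) ^ b : P2) ≠ 0 := pow_ne_zero _ X1_ne_zero
  have hprod : (X ^ a * (X + 1) ^ b : P2) ≠ 0 := mul_ne_zero hXa hXb
  have hne : (X ^ a * (X + 1) ^ b * C : P2) ≠ 0 := mul_ne_zero hprod hC
  have e0 : rootMultiplicity 0 (X ^ a * (X + 1) ^ b * C : P2) = a := by
    rw [rootMultiplicity_mul hne, rootMultiplicity_mul hprod, rm_zero,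
      rm_eq_zero_of_eval (p := ((X+1)^b : P2)) (by simp),
      rm_eq_zero_of_eval h0]
    omega
  have e1 : rootMultiplicity 1 (X ^ a * (X + 1) ^ b * C : P2) = b := by
    rw [rootMultiplicity_mul hne, rootMultiplicity_mul hprod, rm_one,
      rm_eq_zero_of_eval (p := ((X:P2)^a)) (by simp),
      rm_eq_zero_of_eval h1]
    omega
  rw [oddPart, e0, e1]
  exact mul_div_cancel_left₀ C hprod

lemma oddPart_shift (c : ℕ) (Q : P2) (hQ : Q ≠ 0) :
    oddPart ((X * (X + 1)) ^ c * Q) = oddPart Q := by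
  set a := rootMultiplicity 0 Q with ha
  set b := rootMultiplicity 1 Q with hb
  have d0 : (X ^ a : P2) ∣ Q := by
    rw [X0_eq]; exact pow_rootMultiplicity_dvd Q 0
  have d1 : ((X + 1) ^ b : P2) ∣ Q := by
    rw [X1_eq]; exact pow_rootMultiplicity_dvd Q 1
  have hcop : IsCoprime (X : P2) (X + 1) := by
    refine ⟨1, 1, ?_⟩
    linear_combination (X : P2) * two_eq_zero'
  have hdvd : (X ^ a * (X + 1) ^ b : P2) ∣ Q :=
    (hcop.pow).mul_dvd d0 d1
  obtain ⟨R, hR⟩ := hdvd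
  have hR0 : R.eval 0 ≠ 0 := by
    intro h
    have hdvd' : (X - Polynomial.C 0 : P2) ∣ R := dvd_iff_isRoot.2 h
    have : (X - Polynomial.C 0 : P2) ^ (a + 1) ∣ Q := by
      rw [hR, pow_succ]
      exact mul_dvd_mul (by rw [← X0_eq]; exact dvd_mul_right _ _) hdvd'
    exact pow_rootMultiplicity_not_dvd hQ 0 this
  have hR1 : R.eval 1 ≠ 0 := by
    intro h
    have hdvd' : (X - Polynomial.C 1 : P2) ∣ R := dvd_iff_isRoot.2 h
    have : (X - Polynomial.C 1 : P2) ^ (b + 1) ∣ Q := by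
      rw [hR, pow_succ]
      refine mul_dvd_mul ?_ hdvd'
      rw [← X1_eq]
      exact dvd_mul_left _ _
    exact pow_rootMultiplicity_not_dvd hQ 1 this
  have key1 : (X * (X + 1)) ^ c * Q = X ^ (c + a) * (X + 1) ^ (c + b) * R := by
    rw [hR, mul_pow]; ring
  rw [key1, oddPart_spec _ _ _ hR0 hR1, hR, oddPart_spec _ _ _ hR0 hR1]

lemma M_natDegree : (M : P2).natDegree = 2 := by
  unfold M; compute_degree!

lemma M_monic : (M : P2).Monic := by
  unfold M; monicity!

lemma M_pow_ne_one {k : ℕ} (hk : 1 ≤ k) : (M : P2) ^ k ≠ 1 := by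
  intro h
  have := congrArg Polynomial.natDegree h
  rw [Polynomial.natDegree_pow, M_natDegree, Polynomial.natDegree_one] at this
  omega

lemma hMu : (M : P2) = X * (X + 1) + 1 := by
  unfold M; ring

lemma M_add_one : (M : P2) + 1 = X * (X + 1) := by
  rw [hMu]; linear_combination two_eq_zero'

lemma exists_S (i : ℕ) :
    ∃ S : P2, M ^ (2*i+1) + 1 = (X*(X+1)) * (1 + (X*(X+1)) * S) := by
  induction i with
  | zero =>
    exact ⟨0, by linear_combination hMu + two_eq_zero'⟩
  | succ i ih =>
    obtain ⟨S, hS⟩ := ih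
    refine ⟨S + X*(X+1) + (X*(X+1))^2 * S + 1, ?_⟩
    linear_combination M^2 * hS
      + (M + X*(X+1) + 1) * ((X*(X+1))^2 * S + X*(X+1) - 1) * hMu
      + ((X*(X+1))^3 * S - X*(X+1)) * two_eq_zero'

lemma collatz_zero (A : P2) : collatz A 0 = A := rfl

/-- The phase lemma: one full phase of the dynamics. -/
lemma phase (t i : ℕ) (hi : 1 ≤ i) :
    (∀ k < 2^t, collatz (M ^ (2^t * (2*i+1)) + 1) (2*k+1) ≠ 1) ∧
    collatz (M ^ (2^t * (2*i+1)) + 1) (2*(2^t)+1)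
      = collatz (M ^ (2^t * (2*i+1) + 2^t) + 1) 1 := by
  obtain ⟨u, hu⟩ : ∃ u : P2, u = X*(X+1) := ⟨_, rfl⟩
  obtain ⟨S, hS⟩ := exists_S i
  rw [← hu] at hS
  have hMu' : (M : P2) = u + 1 := by rw [hu]; exact hMu
  set m := 2*i+1 with hm
  set ℓ := 2^t with hℓ
  set n := ℓ * m with hn
  set A := (M : P2)^n + 1 with hA
  have hℓ1 : 1 ≤ ℓ := Nat.one_le_two_pow
  have frob : ∀ x y : P2, (x+y)^ℓ = x^ℓ + y^ℓ := fun x y => add_pow_char_pow ..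
  have hMne : (M : P2) ≠ 0 := M_monic.ne_zero
  have hune : u ≠ 0 := by rw [hu]; exact mul_ne_zero X_ne_zero X1_ne_zero
  have hu0 : Polynomial.eval 0 u = 0 := by rw [hu]; simp
  have hu1 : Polynomial.eval 1 u = 0 := by rw [hu]; simp; decide
  have hS0 : S ≠ 0 := by
    intro h
    rw [h] at hS
    have hS' : (M:P2)^(2*i) * M = 1 * M := by
      rw [one_mul, ← pow_succ]
      have : (M:P2)^m + 1 = M + 1 := by rw [hS]; linear_combination -hMu' - two_eq_zero'
      have h2 := add_right_cancel this
      simpa [hm] using h2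
    have := mul_right_cancel₀ hMne hS'
    exact M_pow_ne_one (by omega) this
  have hev : ∀ (c : ZMod 2) (W : P2) (e : ℕ), 1 ≤ e → Polynomial.eval c u = 0 →
      Polynomial.eval c (1 + u^e * W) = 1 := by
    intro c W e he h0
    simp [h0, zero_pow (by omega : e ≠ 0)]
  have hufac : ∀ C : P2, u * C = X^1 * (X+1)^1 * C := by
    intro C; rw [hu]; ring
  have hTexp : (M:P2)^n + 1 = u^ℓ * (1 + u^ℓ * S^ℓ) := by
    calc (M:P2)^n + 1 = (M^m)^ℓ + 1^ℓ := by rw [hn, mul_comm ℓ m, pow_mul, one_pow]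
    _ = (M^m + 1)^ℓ := (frob _ _).symm
    _ = (u * (1 + u*S))^ℓ := by rw [hS]
    _ = u^ℓ * (1 + u*S)^ℓ := mul_pow ..
    _ = u^ℓ * (1 + u^ℓ * S^ℓ) := by rw [frob 1 (u*S), one_pow, mul_pow]
  have hC0 : collatz A 1 = 1 + u^ℓ * S^ℓ := by
    rw [show (1:ℕ) = 2*0+1 by omega, collatz_odd_step, collatz_zero, hA, hTexp]
    rw [hu, mul_pow]
    exact oddPart_spec ℓ ℓ _
      (by simp [zero_pow (show ℓ ≠ 0 by omega)])
      (by simp [show (1:ZMod 2)+1 = 0 by decide, zero_pow (show ℓ ≠ 0 by omega)])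
  have hstep : ∀ k, 1 ≤ k → k ≤ ℓ →
      collatz A (2*k) = u * (1 + u^(ℓ-k) * (M^k * S^ℓ)) := by
    intro k hk1 hk2
    induction k, hk1 using Nat.le_induction with
    | base =>
      rw [show 2*1 = 2*0+2 by omega, collatz_even_step, show 2*0+1 = 1 by omega, hC0]
      obtain ⟨e, he1, he2⟩ : ∃ e, ℓ = e + 1 ∧ ℓ - 1 = e := ⟨ℓ-1, by omega⟩
      rw [he2, he1]
      linear_combination hMu' + two_eq_zero'
    | succ k hk ih =>
      have hkl : k ≤ ℓ := by omega
      have ihk := ih hkl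
      obtain ⟨e, he1, he2⟩ : ∃ e, ℓ - k = e + 1 ∧ ℓ - (k+1) = e := ⟨ℓ-(k+1), by omega⟩
      rw [show 2*(k+1) = 2*k+2 by omega, collatz_even_step, collatz_odd_step, ihk,
        hufac, oddPart_spec 1 1 _
          (by rw [hev 0 _ (ℓ-k) (by omega) hu0]; exact one_ne_zero)
          (by rw [hev 1 _ (ℓ-k) (by omega) hu1]; exact one_ne_zero),
        he1, he2]
      linear_combination hMu' + two_eq_zero'
  have hne1 : ∀ (e k2 : ℕ), (1 : P2) + u^e * (M^k2 * S^ℓ) ≠ 1 := by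
    intro e k2 h
    rw [add_eq_left] at h
    exact (mul_ne_zero (pow_ne_zero _ hune)
      (mul_ne_zero (pow_ne_zero _ hMne) (pow_ne_zero _ hS0))) h
  constructor
  · intro k hk
    rcases Nat.eq_zero_or_pos k with h0 | h1
    · subst h0
      rw [show 2*0+1 = 1 by omega, hC0]
      intro h
      rw [add_eq_left] at h
      exact (mul_ne_zero (pow_ne_zero _ hune) (pow_ne_zero _ hS0)) h
    · rw [collatz_odd_step, hstep k h1 (le_of_lt hk), hufac,
        oddPart_spec 1 1 _
          (by rw [hev 0 _ (ℓ-k) (by omega) hu0]; exact one_ne_zero)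
          (by rw [hev 1 _ (ℓ-k) (by omega) hu1]; exact one_ne_zero)]
      exact hne1 _ _
  · -- terminal step
    have hTu : u^2 * (1 + M*S) = M^(m+1) + 1 := by
      linear_combination (-(M:P2))*hS + (1 - u)*hMu'
    have hT0 : (1 : P2) + M*S ≠ 0 := by
      intro h
      refine M_pow_ne_one (k := m+1) (by omega) ?_
      linear_combination u^2*h - hTu - two_eq_zero'
    have hTl : ((1:P2) + M*S)^ℓ = 1 + M^ℓ * S^ℓ := by
      rw [frob 1 (M*S), one_pow, mul_pow]
    have h2ℓ : collatz A (2*ℓ) = u * ((1 + M*S)^ℓ) := by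
      rw [hstep ℓ hℓ1 le_rfl, Nat.sub_self, pow_zero, one_mul, hTl]
    have hnl : (M:P2)^(n+ℓ) + 1 = (X*(X+1))^(2*ℓ) * ((1 + M*S)^ℓ) := by
      have hexp : n + ℓ = (m+1) * ℓ := by rw [hn, hm]; ring
      calc (M:P2)^(n+ℓ) + 1 = (M^(m+1))^ℓ + 1^ℓ := by rw [hexp, pow_mul, one_pow]
      _ = (M^(m+1) + 1)^ℓ := (frob _ _).symm
      _ = (u^2 * (1 + M*S))^ℓ := by rw [hTu]
      _ = (X*(X+1))^(2*ℓ) * ((1 + M*S)^ℓ) := by rw [mul_pow, ← pow_mul, hu]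
    rw [collatz_odd_step, h2ℓ, show (1:ℕ) = 2*0+1 by omega, collatz_odd_step, collatz_zero,
      hnl, oddPart_shift (2*ℓ) _ (pow_ne_zero _ hT0),
      show u * ((1 + M*S)^ℓ) = (X*(X+1))^1 * ((1+M*S)^ℓ) by rw [hu, pow_one],
      oddPart_shift 1 _ (pow_ne_zero _ hT0)]

lemma collatz_shift (A A' : P2) (a : ℕ) (h : collatz A (2*a+1) = collatz A' (2*0+1)) :
    ∀ d, collatz A (2*(a+d)+1) = collatz A' (2*d+1) := by
  intro d
  induction d with
  | zero => simpa using h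
  | succ d ih =>
    rw [show a+(d+1) = (a+d)+1 by omega,
      collatz_odd_step A ((a+d)+1), show 2*((a+d)+1) = 2*(a+d)+2 by omega,
      collatz_even_step, ih,
      collatz_odd_step A' (d+1), show 2*(d+1) = 2*d+2 by omega, collatz_even_step]

lemma key (j : ℕ) : ∀ r : ℕ, 1 ≤ r → j < 2^(r-1) →
    collatz (M ^ (2^r - j) + 1) (2*j+1) = 1 ∧
    ∀ k < j, collatz (M ^ (2^r - j) + 1) (2*k+1) ≠ 1 := by
  induction j using Nat.strong_induction_on with
  | _ j IH =>
    intro r hr hj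
    have h2r : 2^r = 2 * 2^(r-1) := by
      rw [← pow_succ']
      congr 1
      omega
    rcases Nat.eq_zero_or_pos j with h0 | h1
    · subst h0
      constructor
      · rw [Nat.sub_zero, show 2*0+1 = 1 by omega, show (1:ℕ) = 2*0+1 by omega,
          collatz_odd_step, collatz_zero]
        have hfr : ((M:P2)+1)^(2^r) = M^(2^r) + 1^(2^r) := add_pow_char_pow ..
        have : (M:P2)^(2^r) + 1 = X^(2^r) * (X+1)^(2^r) * 1 := by
          rw [mul_one, ← mul_pow, ← M_add_one, hfr, one_pow]
        rw [this, oddPart_spec _ _ 1 (by simp) (by simp)]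
      · intro k hk; omega
    · -- j ≥ 1 : extract 2-adic part of n
      set n := 2^r - j with hn
      have hnlb : 2^(r-1) < n := by omega
      have hnub : n < 2^r := by omega
      have hn0 : n ≠ 0 := by omega
      obtain ⟨t, m, hm2, hnm⟩ := Nat.exists_eq_pow_mul_and_not_dvd hn0 2 (by norm_num)
      have hmodd : m % 2 = 1 := by omega
      obtain ⟨i, hi⟩ : ∃ i, m = 2*i+1 := ⟨m/2, by omega⟩
      have htr : t < r := by
        by_contra hcon
        have : 2^r ≤ 2^t := Nat.pow_le_pow_right (by norm_num) (by omega)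
        have : 2^t ≤ 2^t * m := Nat.le_mul_of_pos_right _ (by omega)
        omega
      have hi1 : 1 ≤ i := by
        by_contra hcon
        have hm1 : m = 1 := by omega
        rw [hm1, Nat.mul_one] at hnm
        have h1 : 2^t ≤ 2^(r-1) := Nat.pow_le_pow_right (by norm_num) (by omega)
        omega
      have hldvd : 2^t ∣ j := by
        have d1 : 2^t ∣ n := ⟨m, hnm⟩
        have d2 : 2^t ∣ 2^r := pow_dvd_pow 2 (by omega)
        have : j = 2^r - n := by omega
        rw [this]
        exact Nat.dvd_sub d2 d1
      have hlj : 2^t ≤ j := Nat.le_of_dvd h1 hldvd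
      have hl1 : 1 ≤ 2^t := Nat.one_le_two_pow
      -- apply phase lemma
      have hph := phase t i hi1
      rw [← hi, ← hnm] at hph
      -- IH at j - 2^t
      have hIH := IH (j - 2^t) (by omega) r hr (by omega)
      have hnl : 2^r - (j - 2^t) = n + 2^t := by omega
      rw [hnl] at hIH
      have hshift := collatz_shift _ _ (2^t) (by rw [hph.2])
      constructor
      · rw [show 2*j+1 = 2*(2^t + (j - 2^t))+1 by omega, hshift]
        exact hIH.1
      · intro k hk
        rcases Nat.lt_or_ge k (2^t) with hsm | hbg
        · exact hph.1 k hsm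
        · rw [show 2*k+1 = 2*(2^t + (k - 2^t))+1 by omega, hshift]
          exact hIH.2 _ (by omega)

theorem length_M_pow_add_one (r j : ℕ) (hr : 1 ≤ r) (hj : j ≤ 2 ^ (r - 1) - 1)
    (A : Polynomial (ZMod 2)) (hA : A = M ^ (2 ^ r - j) + 1) :
    collatzLength A = j + 1 := by
  have hj' : j < 2^(r-1) := by
    have : 1 ≤ 2^(r-1) := Nat.one_le_two_pow
    omega
  obtain ⟨h1, h2⟩ := key j r hr hj'
  rw [← hA] at h1 h2
  unfold collatzLength
  have hs : sInf {m : ℕ | collatz A (2*m+1) = 1} = j := by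
    apply le_antisymm
    · exact Nat.sInf_le h1
    · refine le_csInf ⟨j, h1⟩ ?_
      intro b hb
      by_contra hcon
      exact h2 b (by omega) hb
  rw [hs]
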